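/- (Lemma 2.4, second estimate of (2.10)) There exists a constant C > 0, depending only on d, such that for every integer N ≥ 2, every δ > 0, and every measurable ρ : ℝ^d → ℝ with 0 ≤ ρ, ρ ∈ L¹(ℝ^d) ∩ L^∞(ℝ^d), one has sup_{x ∈ ℝ^d} ∫_{ℝ^d} (L^N(x − y))² ρ(y) dy ≤ C · N^{dδ} · (‖ρ‖_{L¹} + ‖ρ‖_{L^∞}). -/

import Mathlib

open MeasureTheory Classical in
noncomputable def Cstar (d : ℕ) : ℝ :=
  Real.Gamma ((d : ℝ) / 2) / (2 * Real.pi ^ ((d : ℝ) / 2))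

open Classical in
/-- The Newtonian interaction kernel `F(x) = C_* x / |x|^d`, with `F(0) = 0`. -/
noncomputable def newtonF (d : ℕ) (x : EuclideanSpace ℝ (Fin d)) : EuclideanSpace ℝ (Fin d) :=
  if x = 0 then 0 else (Cstar d / ‖x‖ ^ d) • x

/-- The rescaled mollifier `ψ_N(x) = N^{dδ} ψ(N^δ x)`. -/
noncomputable def psiN (d N : ℕ) (δ : ℝ) (ψ : EuclideanSpace ℝ (Fin d) → ℝ)
    (x : EuclideanSpace ℝ (Fin d)) : ℝ :=
  (N : ℝ) ^ ((d : ℝ) * δ) * ψ ((((N : ℝ) ^ δ) : ℝ) • x)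

open MeasureTheory in
/-- The regularized kernel `F^N = F * ψ_N`, i.e. `F^N(x) = ∫ F(x-y) ψ_N(y) dy`. -/
noncomputable def FN (d N : ℕ) (δ : ℝ) (ψ : EuclideanSpace ℝ (Fin d) → ℝ)
    (x : EuclideanSpace ℝ (Fin d)) : EuclideanSpace ℝ (Fin d) :=
  ∫ y, psiN d N δ ψ y • newtonF d (x - y)

open Classical in
/-- The cut-off function `L^N`. -/
noncomputable def LN (d N : ℕ) (δ : ℝ) (x : EuclideanSpace ℝ (Fin d)) : ℝ :=
  if 6 * (N : ℝ) ^ (-δ) ≤ ‖x‖ then 6 ^ d / ‖x‖ ^ d else (N : ℝ) ^ ((d : ℝ) * δ)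

open MeasureTheory

lemma LN_nonneg (d N : ℕ) (δ : ℝ) (x : EuclideanSpace ℝ (Fin d)) : 0 ≤ LN d N δ x := by
  unfold LN; split <;> positivity

lemma LN_measurable (d N : ℕ) (δ : ℝ) : Measurable (LN d N δ) := by
  unfold LN
  exact Measurable.ite (measurableSet_le measurable_const measurable_norm)
    (measurable_const.div (measurable_norm.pow_const d)) measurable_const

lemma LN_scaling (d N : ℕ) (hN : 2 ≤ N) (δ : ℝ) (z : EuclideanSpace ℝ (Fin d)) :
    LN d N δ z = (N : ℝ) ^ ((d : ℝ) * δ) * LN d 1 1 (((N : ℝ) ^ δ) • z) := by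
  have hN0 : (0 : ℝ) < (N : ℝ) := by positivity
  have hs : (0 : ℝ) < (N : ℝ) ^ δ := Real.rpow_pos_of_pos hN0 δ
  have hnorm : ‖((N : ℝ) ^ δ) • z‖ = (N : ℝ) ^ δ * ‖z‖ := by
    rw [norm_smul, Real.norm_eq_abs, abs_of_pos hs]
  have hsd : ((N : ℝ) ^ δ) ^ d = (N : ℝ) ^ ((d : ℝ) * δ) := by
    rw [← Real.rpow_natCast ((N : ℝ) ^ δ) d, ← Real.rpow_mul hN0.le, mul_comm δ]
  unfold LN
  simp only [Nat.cast_one, Real.one_rpow, mul_one, hnorm]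
  have hcond : 6 * (N : ℝ) ^ (-δ) ≤ ‖z‖ ↔ 6 ≤ (N : ℝ) ^ δ * ‖z‖ := by
    rw [Real.rpow_neg hN0.le]
    rw [mul_comm ((N:ℝ)^δ) ‖z‖, ← div_le_iff₀ hs, div_eq_mul_inv 6]
  by_cases h : 6 * (N : ℝ) ^ (-δ) ≤ ‖z‖
  · have hz : ‖z‖ ≠ 0 := by
      have : (0:ℝ) < 6 * (N : ℝ) ^ (-δ) := by positivity
      exact (lt_of_lt_of_le this h).ne'
    have hNd : (N : ℝ) ^ ((d : ℝ) * δ) ≠ 0 := by positivity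
    rw [if_pos h, if_pos (hcond.mp h), mul_pow, hsd]
    field_simp
  · rw [if_neg h, if_neg (fun hc => h (hcond.mpr hc)), mul_one]

lemma LN_one_eq (d : ℕ) (z : EuclideanSpace ℝ (Fin d)) :
    LN d 1 1 z = if (6:ℝ) ≤ ‖z‖ then 6 ^ d / ‖z‖ ^ d else 1 := by
  simp [LN]

lemma integrable_LN_one_sq (d : ℕ) (hd : 1 ≤ d) :
    Integrable (fun z : EuclideanSpace ℝ (Fin d) => (LN d 1 1 z) ^ 2) := by
  have hfin : Module.finrank ℝ (EuclideanSpace ℝ (Fin d)) = d := finrank_euclideanSpace_fin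
  have hr : (Module.finrank ℝ (EuclideanSpace ℝ (Fin d)) : ℝ) < 2 * (d : ℝ) := by
    rw [hfin]
    have : (1:ℝ) ≤ (d:ℝ) := by exact_mod_cast hd
    nlinarith
  have hint : Integrable (fun z : EuclideanSpace ℝ (Fin d) => (1 + ‖z‖) ^ (-(2 * (d:ℝ)))) :=
    integrable_one_add_norm hr
  refine (hint.const_mul ((12:ℝ) ^ (2 * d))).mono'
    (((LN_measurable d 1 1).pow_const 2).aestronglyMeasurable)
    (Filter.Eventually.of_forall fun z => ?_)
  have hn : (0:ℝ) ≤ ‖z‖ := norm_nonneg z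
  have h1n : (0:ℝ) < 1 + ‖z‖ := by linarith
  have hrpow : (1 + ‖z‖) ^ (-(2 * (d:ℝ))) = ((1 + ‖z‖) ^ (2 * d : ℕ))⁻¹ := by
    rw [Real.rpow_neg h1n.le, ← Real.rpow_natCast (1 + ‖z‖) (2 * d)]
    push_cast
    ring_nf
  rw [Real.norm_eq_abs, abs_of_nonneg (sq_nonneg _), LN_one_eq, hrpow]
  by_cases h : (6:ℝ) ≤ ‖z‖
  · rw [if_pos h, div_pow, ← pow_mul, ← pow_mul, ← div_eq_mul_inv,
      div_le_div_iff₀ (by positivity) (pow_pos h1n _)]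
    calc (6:ℝ) ^ (d * 2) * (1 + ‖z‖) ^ (2 * d) = (6 * (1 + ‖z‖)) ^ (2 * d) := by
          rw [mul_pow, mul_comm d 2]
      _ ≤ (12 * ‖z‖) ^ (2 * d) := pow_le_pow_left₀ (by positivity) (by linarith) _
      _ = 12 ^ (2 * d) * ‖z‖ ^ (d * 2) := by rw [mul_pow, mul_comm d 2]
  · rw [if_neg h, one_pow]
    push_neg at h
    have h12 : (1 + ‖z‖) ^ (2 * d) ≤ (12:ℝ) ^ (2 * d) := by
      apply pow_le_pow_left₀ (by positivity)
      linarith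
    rw [← div_eq_mul_inv, le_div_iff₀ (pow_pos h1n _), one_mul]
    exact h12

/-- Lemma 2.4, second estimate of (2.10): `‖(L^N)² * ρ‖_∞ ≤ C N^{dδ} (‖ρ‖₁ + ‖ρ‖_∞)`
with C depending only on d. -/
theorem stmt4 (d : ℕ) (hd : 2 ≤ d) :
    ∃ C > 0, ∀ N : ℕ, 2 ≤ N → ∀ δ : ℝ, 0 < δ →
      ∀ ρ : EuclideanSpace ℝ (Fin d) → ℝ, Measurable ρ → (∀ y, 0 ≤ ρ y) →
        Integrable ρ → MemLp ρ ⊤ →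
        ∀ x : EuclideanSpace ℝ (Fin d),
          ∫ y, (LN d N δ (x - y)) ^ 2 * ρ y ≤
            C * (N : ℝ) ^ ((d : ℝ) * δ) * ((∫ y, |ρ y|) + (eLpNorm ρ ⊤ volume).toReal) := by
  set A := ∫ z : EuclideanSpace ℝ (Fin d), (LN d 1 1 z) ^ 2 with hA
  have hA0 : 0 ≤ A := integral_nonneg fun z => sq_nonneg _
  refine ⟨A + 1, by linarith, ?_⟩
  intro N hN δ hδ ρ hρm hρ0 hρ1 hrtop x
  have hN0 : (0:ℝ) < (N:ℝ) := by positivity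
  set s := (N:ℝ) ^ δ with hsdef
  have hs : (0:ℝ) < s := Real.rpow_pos_of_pos hN0 δ
  have hsd : s ^ d = (N : ℝ) ^ ((d : ℝ) * δ) := by
    rw [hsdef, ← Real.rpow_natCast ((N : ℝ) ^ δ) d, ← Real.rpow_mul hN0.le, mul_comm δ]
  have hscale : ∀ z : EuclideanSpace ℝ (Fin d),
      (LN d N δ z) ^ 2 = ((N:ℝ) ^ ((d:ℝ) * δ)) ^ 2 * (LN d 1 1 (s • z)) ^ 2 := fun z => by
    rw [LN_scaling d N hN δ z, mul_pow]
  have hI1 : Integrable (fun z : EuclideanSpace ℝ (Fin d) => (LN d 1 1 (s • z)) ^ 2) := by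
    rw [integrable_comp_smul_iff volume (fun w => (LN d 1 1 w) ^ 2) hs.ne']
    exact integrable_LN_one_sq d (le_trans one_le_two hd)
  have hI : Integrable (fun z : EuclideanSpace ℝ (Fin d) => (LN d N δ z) ^ 2) := by
    simp_rw [hscale]
    exact hI1.const_mul _
  set M := (eLpNorm ρ ⊤ volume).toReal with hM
  have hM0 : 0 ≤ M := ENNReal.toReal_nonneg
  have hρle : ∀ᵐ y ∂(volume : Measure (EuclideanSpace ℝ (Fin d))), ρ y ≤ M := by
    filter_upwards [enorm_ae_le_eLpNormEssSup ρ
      (volume : Measure (EuclideanSpace ℝ (Fin d)))] with y hy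
    have htop : eLpNormEssSup ρ (volume : Measure (EuclideanSpace ℝ (Fin d))) ≠ ⊤ := by
      rw [← eLpNorm_exponent_top]; exact hrtop.2.ne
    have h2 := ENNReal.toReal_mono htop hy
    rw [enorm_eq_nnnorm, ENNReal.coe_toReal] at h2
    calc ρ y ≤ |ρ y| := le_abs_self _
      _ = (‖ρ y‖₊ : ℝ) := by rw [coe_nnnorm, Real.norm_eq_abs]
      _ ≤ M := by rwa [hM, eLpNorm_exponent_top]
  have hg : Integrable
      (fun y : EuclideanSpace ℝ (Fin d) => (LN d N δ (x - y)) ^ 2 * M) :=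
    (hI.comp_sub_left x).mul_const M
  have step1 : ∫ y, (LN d N δ (x - y)) ^ 2 * ρ y ≤ ∫ y, (LN d N δ (x - y)) ^ 2 * M := by
    refine integral_mono_of_nonneg ?_ hg ?_
    · exact Filter.Eventually.of_forall fun y => mul_nonneg (sq_nonneg _) (hρ0 y)
    · filter_upwards [hρle] with y hy
      exact mul_le_mul_of_nonneg_left hy (sq_nonneg _)
  have step2 : ∫ y, (LN d N δ (x - y)) ^ 2 * M
      = (∫ z, (LN d N δ z) ^ 2) * M := by
    rw [integral_mul_const]
    congr 1
    exact integral_sub_left_eq_self (fun z => (LN d N δ z) ^ 2) volume x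
  have step3 : (∫ z : EuclideanSpace ℝ (Fin d), (LN d N δ z) ^ 2)
      = (N:ℝ) ^ ((d:ℝ) * δ) * A := by
    simp_rw [hscale]
    rw [integral_const_mul,
      Measure.integral_comp_smul_of_nonneg volume (fun w => (LN d 1 1 w) ^ 2) s (hR := hs.le),
      smul_eq_mul, finrank_euclideanSpace_fin, hsd, ← hA]
    have hc : (N : ℝ) ^ ((d:ℝ) * δ) ≠ 0 := by positivity
    field_simp
  have hInt1 : 0 ≤ ∫ y, |ρ y| := integral_nonneg fun y => abs_nonneg _
  have hNd0 : (0:ℝ) ≤ (N:ℝ) ^ ((d:ℝ) * δ) := by positivity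
  calc ∫ y, (LN d N δ (x - y)) ^ 2 * ρ y ≤ (N:ℝ) ^ ((d:ℝ) * δ) * A * M := by
        rw [← step3, ← step2]; exact step1
    _ ≤ (A + 1) * (N : ℝ) ^ ((d : ℝ) * δ) * ((∫ y, |ρ y|) + M) := by
        nlinarith [mul_nonneg (mul_nonneg hNd0 hA0) hInt1, mul_nonneg hNd0 hInt1,
          mul_nonneg hNd0 hM0]
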